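/- For every η > 0 and every integer b with b ≥ 2/η one has Σ_{k : ηb < k ≤ b} C(b,k) λ_{b,k} ≤ 2 Λ([0,1]) / η², where the sum runs over integers k with 2 ≤ k ≤ b and k > ηb, and C(b,k) denotes the binomial coefficient. -/

import Mathlib

open MeasureTheory Real Set Filter Topology

/-- The merging rate `λ_{b,k} = ∫_{[0,1]} p^{k−2} (1−p)^{b−k} Λ(dp)`. -/
noncomputable def lamBK (Λ : Measure ℝ) (b k : ℕ) : ℝ :=
  ∫ p in Set.Icc (0:ℝ) 1, p ^ ((k : ℝ) - 2) * (1 - p) ^ ((b : ℝ) - (k : ℝ)) ∂Λ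

lemma choose_id (m j : ℕ) :
    (m+2).choose (j+2) * ((j+2)*(j+1)) = (m+2)*(m+1) * m.choose j := by
  have h1 := Nat.add_one_mul_choose_eq (m+1) (j+1)
  have h2 := Nat.add_one_mul_choose_eq m j
  simp only [Nat.add_assoc, Nat.reduceAdd] at h1
  calc (m+2).choose (j+2) * ((j+2)*(j+1))
      = ((m+2).choose (j+2) * (j+2)) * (j+1) := by ring
    _ = ((m+2) * (m+1).choose (j+1)) * (j+1) := by rw [← h1]
    _ = (m+2) * ((m+1).choose (j+1) * (j+1)) := by ring
    _ = (m+2) * ((m+1) * m.choose j) := by rw [← h2]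
    _ = (m+2)*(m+1) * m.choose j := by ring

lemma sum_binom_le_one (b : ℕ) (hb : 2 ≤ b) (S : Finset ℕ) (hS : S ⊆ Finset.Icc 2 b)
    (p : ℝ) (hp : p ∈ Set.Icc (0:ℝ) 1) :
    ∑ k ∈ S, ((b-2).choose (k-2) : ℝ) * (p ^ (k-2) * (1-p) ^ (b-k)) ≤ 1 := by
  obtain ⟨hp0, hp1⟩ := hp
  have hq : (0:ℝ) ≤ 1 - p := by linarith
  have hle : ∑ k ∈ S, ((b-2).choose (k-2) : ℝ) * (p ^ (k-2) * (1-p) ^ (b-k))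
      ≤ ∑ k ∈ Finset.Icc 2 b, ((b-2).choose (k-2) : ℝ) * (p ^ (k-2) * (1-p) ^ (b-k)) := by
    apply Finset.sum_le_sum_of_subset_of_nonneg hS
    intro i _ _
    positivity
  refine hle.trans ?_
  have hre : ∑ k ∈ Finset.Icc 2 b, ((b-2).choose (k-2) : ℝ) * (p ^ (k-2) * (1-p) ^ (b-k))
      = ∑ j ∈ Finset.range (b-1), p ^ j * (1-p) ^ (b-2-j) * ((b-2).choose j : ℝ) := by
    apply Finset.sum_nbij' (fun k => k - 2) (fun j => j + 2)
    · intro k hk; simp only [Finset.mem_Icc] at hk; simp only [Finset.mem_range]; omega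
    · intro j hj; simp only [Finset.mem_range] at hj; simp only [Finset.mem_Icc]; omega
    · intro k hk; simp only [Finset.mem_Icc] at hk; omega
    · intro j hj; simp only [Finset.mem_range] at hj; omega
    · intro k hk; simp only [Finset.mem_Icc] at hk
      have : b - k = b - 2 - (k - 2) := by omega
      rw [this]; ring
  rw [hre]
  have hap := add_pow p (1-p) (b-2)
  have hb1 : b - 2 + 1 = b - 1 := by omega
  rw [hb1] at hap
  rw [← hap]
  simp

/-- For every `η > 0` and every integer `b ≥ 2/η`,
`Σ_{k : ηb < k ≤ b} C(b,k) λ_{b,k} ≤ 2 Λ([0,1]) / η²`, the sum ranging over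
integers `k` with `2 ≤ k ≤ b` and `k > ηb`. -/
theorem large_jump_rate_bound (Λ : Measure ℝ) [IsFiniteMeasure Λ] (hΛ : Λ ≠ 0)
    (hsupp : Λ (Set.Icc (0:ℝ) 1)ᶜ = 0) :
    ∀ η : ℝ, 0 < η → ∀ b : ℕ, 2 / η ≤ (b : ℝ) →
      ∑ k ∈ (Finset.Icc 2 b).filter (fun k : ℕ => η * (b : ℝ) < (k : ℝ)),
          (b.choose k : ℝ) * lamBK Λ b k
        ≤ 2 * (Λ (Set.Icc (0:ℝ) 1)).toReal / η ^ 2 := by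
  intro η hη b hb
  have hRHS0 : 0 ≤ 2 * (Λ (Set.Icc (0:ℝ) 1)).toReal / η ^ 2 := by positivity
  by_cases hb2 : 2 ≤ b
  swap
  · have hemp : Finset.Icc 2 b = ∅ := by
      apply Finset.Icc_eq_empty; omega
    simp [hemp, hRHS0]
  -- main case
  have hηb : 2 ≤ η * b := by
    rw [div_le_iff₀ hη] at hb; linarith [hb]
  set S := (Finset.Icc 2 b).filter (fun k : ℕ => η * (b : ℝ) < (k : ℝ)) with hSdef
  have hSsub : S ⊆ Finset.Icc 2 b := Finset.filter_subset _ _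
  -- rewrite lamBK with natural powers
  have hlam : ∀ k ∈ S, lamBK Λ b k
      = ∫ p in Set.Icc (0:ℝ) 1, p ^ (k-2) * (1-p) ^ (b-k) ∂Λ := by
    intro k hk
    have hk' := hSsub hk
    simp only [Finset.mem_Icc] at hk'
    unfold lamBK
    congr 1
    ext p
    have h1 : (k : ℝ) - 2 = ((k - 2 : ℕ) : ℝ) := by
      rw [Nat.cast_sub hk'.1]; norm_num
    have h2 : (b : ℝ) - (k : ℝ) = ((b - k : ℕ) : ℝ) := by
      rw [Nat.cast_sub hk'.2]
    rw [h1, h2, Real.rpow_natCast, Real.rpow_natCast]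
  -- integrability
  have hint : ∀ k : ℕ, IntegrableOn (fun p : ℝ => p ^ (k-2) * (1-p) ^ (b-k))
      (Set.Icc (0:ℝ) 1) Λ := by
    intro k
    apply Continuous.integrableOn_Icc
    continuity
  -- coefficient bound
  have hcoef : ∀ k ∈ S, (b.choose k : ℝ) ≤ 2 / η^2 * ((b-2).choose (k-2) : ℝ) := by
    intro k hk
    simp only [hSdef, Finset.mem_filter, Finset.mem_Icc] at hk
    obtain ⟨⟨hk2, hkb⟩, hkη⟩ := hk
    obtain ⟨j, rfl⟩ : ∃ j, k = j + 2 := ⟨k - 2, by omega⟩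
    obtain ⟨m, rfl⟩ : ∃ m, b = m + 2 := ⟨b - 2, by omega⟩
    have hid := choose_id m j
    have hidR : ((m+2).choose (j+2) : ℝ) * ((j+2)*(j+1))
        = ((m+2)*(m+1) : ℕ) * ((m.choose j : ℕ) : ℝ) := by
      exact_mod_cast congrArg (fun n : ℕ => (n : ℝ)) hid
    have hsimp : (m + 2 - 2 : ℕ) = m := by omega
    have hsimp2 : (j + 2 - 2 : ℕ) = j := by omega
    rw [hsimp, hsimp2]
    have hk2R : (2:ℝ) ≤ ((j:ℝ)+2) := by linarith [show (0:ℝ) ≤ (j:ℝ) from Nat.cast_nonneg j]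
    have hkηR : η * ((m:ℝ)+2) < (j:ℝ)+2 := by push_cast at hkη ⊢; linarith
    have hηbR : (2:ℝ) ≤ η * ((m:ℝ)+2) := by push_cast at hηb; linarith
    -- η^2 * (m+2)*(m+1) ≤ 2 * (j+2)*(j+1)
    have hkey : η^2 * (((m:ℝ)+2)*((m:ℝ)+1)) ≤ 2 * (((j:ℝ)+2)*((j:ℝ)+1)) := by
      nlinarith [sq_nonneg (η * ((m:ℝ)+2) - ((j:ℝ)+2)), hη.le,
        mul_pos hη (by positivity : (0:ℝ) < (m:ℝ)+2)]
    have hjpos : (0:ℝ) < ((j:ℝ)+2)*((j:ℝ)+1) := by positivity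
    have hchpos : (0:ℝ) ≤ ((m.choose j : ℕ) : ℝ) := by positivity
    rw [div_mul_eq_mul_div, le_div_iff₀ (by positivity : (0:ℝ) < η^2)]
    -- goal: choose(m+2,j+2) * η^2 ≤ 2 * choose(m,j)
    push_cast at hidR ⊢
    nlinarith [hidR, hkey, hchpos, mul_le_mul_of_nonneg_left hkey hchpos]
  -- nonnegativity of integrals
  have hnn : ∀ k : ℕ, 0 ≤ ∫ p in Set.Icc (0:ℝ) 1, p ^ (k-2) * (1-p) ^ (b-k) ∂Λ := by
    intro k
    apply setIntegral_nonneg measurableSet_Icc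
    intro p hp
    obtain ⟨hp0, hp1⟩ := hp
    have : (0:ℝ) ≤ 1 - p := by linarith
    positivity
  -- step 1 : bound the sum by coefficients
  have step1 : ∑ k ∈ S, (b.choose k : ℝ) * lamBK Λ b k
      ≤ 2 / η^2 * ∑ k ∈ S, ((b-2).choose (k-2) : ℝ)
          * ∫ p in Set.Icc (0:ℝ) 1, p ^ (k-2) * (1-p) ^ (b-k) ∂Λ := by
    rw [Finset.mul_sum]
    apply Finset.sum_le_sum
    intro k hk
    rw [hlam k hk, ← mul_assoc]
    exact mul_le_mul_of_nonneg_right (hcoef k hk) (hnn k)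
  refine step1.trans ?_
  -- step 2 : exchange sum and integral
  have step2 : ∑ k ∈ S, ((b-2).choose (k-2) : ℝ)
        * ∫ p in Set.Icc (0:ℝ) 1, p ^ (k-2) * (1-p) ^ (b-k) ∂Λ
      = ∫ p in Set.Icc (0:ℝ) 1,
          (∑ k ∈ S, ((b-2).choose (k-2) : ℝ) * (p ^ (k-2) * (1-p) ^ (b-k))) ∂Λ := by
    rw [integral_finset_sum]
    · simp_rw [integral_const_mul]
    · intro k _
      exact ((hint k).const_mul _)
  rw [step2]
  -- step 3 : bound the integral by the measure
  have step3 : ∫ p in Set.Icc (0:ℝ) 1,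
        (∑ k ∈ S, ((b-2).choose (k-2) : ℝ) * (p ^ (k-2) * (1-p) ^ (b-k))) ∂Λ
      ≤ ∫ p in Set.Icc (0:ℝ) 1, (1:ℝ) ∂Λ := by
    apply setIntegral_mono_on
    · exact integrable_finset_sum _ (fun k _ => (hint k).const_mul _)
    · exact integrableOn_const (measure_ne_top Λ _)
    · exact measurableSet_Icc
    · intro p hp
      exact sum_binom_le_one b hb2 S hSsub p hp
  have hfin : ∫ p in Set.Icc (0:ℝ) 1, (1:ℝ) ∂Λ = (Λ (Set.Icc (0:ℝ) 1)).toReal := by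
    simp [Measure.real]
  calc 2 / η^2 * ∫ p in Set.Icc (0:ℝ) 1,
          (∑ k ∈ S, ((b-2).choose (k-2) : ℝ) * (p ^ (k-2) * (1-p) ^ (b-k))) ∂Λ
      ≤ 2 / η^2 * (Λ (Set.Icc (0:ℝ) 1)).toReal := by
        apply mul_le_mul_of_nonneg_left _ (by positivity)
        rw [← hfin]; exact step3
    _ = 2 * (Λ (Set.Icc (0:ℝ) 1)).toReal / η ^ 2 := by ring
  done
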